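/- Let X : ℤ → ℝ be a nondecreasing function, let b be a real number, and let n ≥ 2 be an integer with X(n − 1) ≥ b and X(1) < b. Then there exists a natural number k such that X(n − 2^(2^k) + 1) ≥ b and X(n − 2^(2^(k+1)) + 1) < b. -/

import Mathlib

theorem approximate_region_first_phase
    (X : ℤ → ℝ) (hX : Monotone X) (b : ℝ) (n : ℤ) (hn : 2 ≤ n)
    (h1 : b ≤ X (n - 1)) (h2 : X 1 < b) :
    ∃ k : ℕ, b ≤ X (n - 2 ^ 2 ^ k + 1) ∧ X (n - 2 ^ 2 ^ (k + 1) + 1) < b := by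
  classical
  set P : ℕ → Prop := fun k => b ≤ X (n - 2 ^ 2 ^ k + 1) with hP
  have hP0 : P 0 := by
    show b ≤ X (n - 2 ^ 2 ^ 0 + 1)
    rw [show n - 2 ^ 2 ^ 0 + 1 = n - 1 by ring]
    exact h1
  have hfail : ∃ m, ¬ P m := by
    refine ⟨n.toNat, ?_⟩
    have hnat : n.toNat < 2 ^ 2 ^ n.toNat :=
      lt_of_lt_of_le (Nat.lt_two_pow_self)
        (Nat.pow_le_pow_right (by norm_num) (Nat.le_of_lt (Nat.lt_two_pow_self)))
    have hcast : (n.toNat : ℤ) < 2 ^ 2 ^ n.toNat := by exact_mod_cast hnat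
    have htn : (n.toNat : ℤ) = n := Int.toNat_of_nonneg (by linarith)
    have hle : n - 2 ^ 2 ^ n.toNat + 1 ≤ 1 := by omega
    have := lt_of_le_of_lt (hX hle) h2
    simp only [hP]
    linarith
  have hmspec : ¬ P (Nat.find hfail) := Nat.find_spec hfail
  have hm0 : Nat.find hfail ≠ 0 := fun h => hmspec (h ▸ hP0)
  obtain ⟨k, hk⟩ : ∃ k, Nat.find hfail = k + 1 := ⟨Nat.find hfail - 1, by omega⟩
  have hPk : P k := by
    by_contra h
    have hle : Nat.find hfail ≤ k := Nat.find_le h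
    rw [hk] at hle
    omega
  rw [hk] at hmspec
  exact ⟨k, hPk, lt_of_not_ge hmspec⟩
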